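/- Let s be a string, k ≥ 1 an integer, and let ℓ < ℓ' < ℓ'' be integers with 2^{k−1} ≤ ℓ, ℓ'' < 2^k and 2ℓ'' ≤ |s|, such that the prefixes s[1..2ℓ], s[1..2ℓ'] and s[1..2ℓ''] are all order-preserving squares. Let Δ = ℓ' − ℓ, Δ' = ℓ'' − ℓ', f = ⌊ℓ/Δ⌋ and f' = ⌊ℓ'/Δ'⌋. Then either for every j with 1 ≤ j ≤ f there is a leftmost occurrence x of s with (j−1)·Δ < x ≤ j·Δ, or for every j with 1 ≤ j ≤ f' there is a leftmost occurrence x of s with (j−1)·Δ' < x ≤ j·Δ'. -/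

import Mathlib

/-- Strings are modelled as functions `w : ℕ → α` (1-indexed); a string of length `n`
uses positions `1..n`. `OpIso w i j ℓ` says the fragments `w[i..i+ℓ-1]` and
`w[j..j+ℓ-1]` are order-isomorphic. -/
def OpIso {α : Type*} [LinearOrder α] (w : ℕ → α) (i j ℓ : ℕ) : Prop :=
  ∀ a b : ℕ, a < ℓ → b < ℓ → (w (i + a) ≤ w (i + b) ↔ w (j + a) ≤ w (j + b))

/-- The fragment `w[i..i+2ℓ-1]` is an order-preserving square: its two arms of length `ℓ`
are order-isomorphic but not equal as words. -/
def IsOpSquareAt {α : Type*} [LinearOrder α] (w : ℕ → α) (i ℓ : ℕ) : Prop :=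
  OpIso w i (i + ℓ) ℓ ∧ ∃ a : ℕ, a < ℓ ∧ w (i + a) ≠ w (i + ℓ + a)

/-- Position `i` is a leftmost occurrence in `w`: no earlier position carries the same character. -/
def Leftmost {α : Type*} [LinearOrder α] (w : ℕ → α) (i : ℕ) : Prop :=
  ∀ j : ℕ, 1 ≤ j → j < i → w j ≠ w i

/-- `b` is an op-border of the fragment of length `m` starting at position `i`:
its prefix of length `b` is order-isomorphic to its suffix of length `b`. -/
def OpBorderAt {α : Type*} [LinearOrder α] (w : ℕ → α) (i m b : ℕ) : Prop :=
  b ≤ m ∧ OpIso w i (i + (m - b)) b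
/-- If two equal-length words are order-isomorphic and every character of the second
occurs in the first, then they are equal. -/
private lemma isoEq {α : Type*} [LinearOrder α] (L : ℕ) (u v : ℕ → α)
    (h : ∀ a b : ℕ, a < L → b < L → (u a ≤ u b ↔ v a ≤ v b))
    (hc : ∀ a : ℕ, a < L → ∃ b : ℕ, b < L ∧ v a = u b) :
    ∀ a : ℕ, a < L → u a = v a := by
  have hS : ∀ a : ℕ, a < L → ¬ u a < v a := by
    by_contra hx
    push_neg at hx
    obtain ⟨a0, ha0, hlt0⟩ := hx
    have hne : ((Finset.range L).filter (fun a => u a < v a)).Nonempty :=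
      ⟨a0, by simp only [Finset.mem_filter, Finset.mem_range]; exact ⟨ha0, hlt0⟩⟩
    obtain ⟨m, hmS, hmax⟩ :=
      ((Finset.range L).filter (fun a => u a < v a)).exists_max_image v hne
    simp only [Finset.mem_filter, Finset.mem_range] at hmS
    obtain ⟨hmL, hmlt⟩ := hmS
    obtain ⟨b, hbL, hvb⟩ := hc m hmL
    have h1 : u m < u b := hvb ▸ hmlt
    have h2 : v m < v b := by
      have hle : v m ≤ v b := (h m b hmL hbL).mp h1.le
      have hne2 : ¬ v b ≤ v m := fun hh => absurd ((h b m hbL hmL).mpr hh) (not_le.mpr h1)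
      exact lt_of_le_not_ge hle hne2
    have hbS : b ∈ (Finset.range L).filter (fun a => u a < v a) := by
      simp only [Finset.mem_filter, Finset.mem_range]
      exact ⟨hbL, hvb ▸ h2⟩
    exact absurd (hmax b hbS) (not_le.mpr h2)
  have hT : ∀ a : ℕ, a < L → ¬ v a < u a := by
    by_contra hx
    push_neg at hx
    obtain ⟨a0, ha0, hlt0⟩ := hx
    have hne : ((Finset.range L).filter (fun a => v a < u a)).Nonempty :=
      ⟨a0, by simp only [Finset.mem_filter, Finset.mem_range]; exact ⟨ha0, hlt0⟩⟩
    obtain ⟨m, hmS, hmin⟩ :=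
      ((Finset.range L).filter (fun a => v a < u a)).exists_min_image v hne
    simp only [Finset.mem_filter, Finset.mem_range] at hmS
    obtain ⟨hmL, hmlt⟩ := hmS
    obtain ⟨b, hbL, hvb⟩ := hc m hmL
    have h1 : u b < u m := hvb ▸ hmlt
    have h2 : v b < v m := by
      have hle : v b ≤ v m := (h b m hbL hmL).mp h1.le
      have hne2 : ¬ v m ≤ v b := fun hh => absurd ((h m b hmL hbL).mpr hh) (not_le.mpr h1)
      exact lt_of_le_not_ge hle hne2
    have hbS : b ∈ (Finset.range L).filter (fun a => v a < u a) := by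
      simp only [Finset.mem_filter, Finset.mem_range]
      exact ⟨hbL, hvb ▸ h2⟩
    exact absurd (hmin b hbS) (not_le.mpr h2)
  intro a ha
  exact le_antisymm (not_lt.mp (hT a ha)) (not_lt.mp (hS a ha))

/-- Two op-square prefixes of lengths `2ℓ₁ < 2ℓ₂` together with a `Δ = ℓ₂ - ℓ₁`-block
containing no leftmost occurrence force an exact period `Δ` on the prefix `w[1..ℓ₁]`. -/
private lemma period_of_badblock {α : Type*} [LinearOrder α] (w : ℕ → α) (ℓ₁ ℓ₂ : ℕ)
    (h12 : ℓ₁ < ℓ₂)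
    (H1 : OpIso w 1 (1 + ℓ₁) ℓ₁) (H2 : OpIso w 1 (1 + ℓ₂) ℓ₂)
    (j : ℕ) (hj2 : 2 ≤ j) (hjl : j * (ℓ₂ - ℓ₁) ≤ ℓ₁)
    (hbad : ∀ x : ℕ, (j - 1) * (ℓ₂ - ℓ₁) < x → x ≤ j * (ℓ₂ - ℓ₁) →
      ∃ y : ℕ, 1 ≤ y ∧ y < x ∧ w y = w x) :
    ∀ x : ℕ, 1 ≤ x → x + (ℓ₂ - ℓ₁) ≤ ℓ₁ → w x = w (x + (ℓ₂ - ℓ₁)) := by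
  set Δ : ℕ := ℓ₂ - ℓ₁ with hΔdef
  have hΔ : 0 < Δ := by omega
  have hjj : (j - 1) * Δ + Δ = j * Δ := by
    rw [← Nat.succ_mul]
    congr 1
    omega
  -- comparisons are preserved by shifting by Δ inside [1, ℓ₁]
  have hshift : ∀ x y : ℕ, 1 ≤ x → 1 ≤ y → x + Δ ≤ ℓ₁ → y + Δ ≤ ℓ₁ →
      (w x ≤ w y ↔ w (x + Δ) ≤ w (y + Δ)) := by
    intro x y hx hy hxl hyl
    have e1 := H1 (x + Δ - 1) (y + Δ - 1) (by omega) (by omega)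
    have e2 := H2 (x - 1) (y - 1) (by omega) (by omega)
    rw [show 1 + (x + Δ - 1) = x + Δ by omega, show 1 + (y + Δ - 1) = y + Δ by omega,
        show 1 + ℓ₁ + (x + Δ - 1) = 1 + ℓ₂ + (x - 1) by omega,
        show 1 + ℓ₁ + (y + Δ - 1) = 1 + ℓ₂ + (y - 1) by omega] at e1
    rw [show 1 + (x - 1) = x by omega, show 1 + (y - 1) = y by omega] at e2
    exact e2.trans e1.symm
  have heq : ∀ x y : ℕ, 1 ≤ x → 1 ≤ y → x + Δ ≤ ℓ₁ → y + Δ ≤ ℓ₁ →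
      (w x = w y ↔ w (x + Δ) = w (y + Δ)) := by
    intro x y hx hy hxl hyl
    rw [le_antisymm_iff, le_antisymm_iff, hshift x y hx hy hxl hyl, hshift y x hy hx hyl hxl]
  -- no leftmost occurrence anywhere in ((j-1)Δ, ℓ₁]
  have prop : ∀ x : ℕ, (j - 1) * Δ < x → x ≤ ℓ₁ → ∃ y : ℕ, 1 ≤ y ∧ y < x ∧ w y = w x := by
    intro x
    induction x using Nat.strong_induction_on with
    | _ x ih =>
      intro hx1 hx2
      by_cases hxj : x ≤ j * Δ
      · exact hbad x hx1 hxj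
      · obtain ⟨y, hy1, hy2, hy3⟩ := ih (x - Δ) (by omega) (by omega) (by omega)
        refine ⟨y + Δ, by omega, by omega, ?_⟩
        have h4 := (heq y (x - Δ) hy1 (by omega) (by omega) (by omega)).mp hy3
        rwa [show x - Δ + Δ = x by omega] at h4
  -- every character in [1, ℓ₁] occurs already in [1, (j-1)Δ]
  have minocc : ∀ x : ℕ, 1 ≤ x → x ≤ ℓ₁ →
      ∃ m : ℕ, 1 ≤ m ∧ m ≤ (j - 1) * Δ ∧ w m = w x := by
    intro x
    induction x using Nat.strong_induction_on with
    | _ x ih =>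
      intro hx1 hx2
      by_cases hxs : x ≤ (j - 1) * Δ
      · exact ⟨x, hx1, hxs, rfl⟩
      · obtain ⟨y, hy1, hy2, hy3⟩ := prop x (by omega) hx2
        obtain ⟨m, hm1, hm2, hm3⟩ := ih y hy2 hy1 (by omega)
        exact ⟨m, hm1, hm2, hm3.trans hy3⟩
  -- order-isomorphic windows with contained character set are equal
  have hiso : ∀ a : ℕ, a < ℓ₁ - Δ → w (1 + a) = w (1 + Δ + a) := by
    apply isoEq (ℓ₁ - Δ) (fun a => w (1 + a)) (fun a => w (1 + Δ + a))
    · intro a b ha hb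
      show w (1 + a) ≤ w (1 + b) ↔ w (1 + Δ + a) ≤ w (1 + Δ + b)
      rw [show 1 + Δ + a = (1 + a) + Δ by omega, show 1 + Δ + b = (1 + b) + Δ by omega]
      exact hshift (1 + a) (1 + b) (by omega) (by omega) (by omega) (by omega)
    · intro a ha
      obtain ⟨m, hm1, hm2, hm3⟩ := minocc (1 + Δ + a) (by omega) (by omega)
      refine ⟨m - 1, by omega, ?_⟩
      show w (1 + Δ + a) = w (1 + (m - 1))
      rw [show 1 + (m - 1) = m by omega]
      exact hm3.symm
  intro x hx1 hx2
  have := hiso (x - 1) (by omega)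
  rwa [show 1 + (x - 1) = x by omega, show 1 + Δ + (x - 1) = x + Δ by omega] at this

/-- Iterating an exact period to land in the first period-block. -/
private lemma iterPeriod {α : Type*} [LinearOrder α] (w : ℕ → α) (Δ L : ℕ) (hΔ : 0 < Δ)
    (hP : ∀ x : ℕ, 1 ≤ x → x + Δ ≤ L → w x = w (x + Δ)) :
    ∀ x : ℕ, 1 ≤ x → x ≤ L → ∃ r : ℕ, 1 ≤ r ∧ r ≤ Δ ∧ w r = w x := by
  intro x
  induction x using Nat.strong_induction_on with
  | _ x ih =>
    intro hx1 hx2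
    by_cases hxΔ : x ≤ Δ
    · exact ⟨x, hx1, hxΔ, rfl⟩
    · have he : w (x - Δ) = w x := by
        have := hP (x - Δ) (by omega) (by omega)
        rwa [show x - Δ + Δ = x by omega] at this
      obtain ⟨r, hr1, hr2, hr3⟩ := ih (x - Δ) (by omega) (by omega) (by omega)
      exact ⟨r, hr1, hr2, hr3.trans he⟩

/-- Given three op-square prefixes s[1..2ℓ], s[1..2ℓ'], s[1..2ℓ''] with
2^{k−1} ≤ ℓ < ℓ' < ℓ'' < 2^k, Δ = ℓ' − ℓ, Δ' = ℓ'' − ℓ', f = ⌊ℓ/Δ⌋, f' = ⌊ℓ'/Δ'⌋: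
either every block ((j−1)Δ, jΔ] for 1 ≤ j ≤ f contains a leftmost occurrence, or
every block ((j−1)Δ', jΔ'] for 1 ≤ j ≤ f' contains a leftmost occurrence. -/
theorem leftmost_in_every_block {α : Type*} [LinearOrder α]
    (w : ℕ → α) (n k ℓ ℓ' ℓ'' : ℕ) (hk : 1 ≤ k)
    (h1 : 2 ^ (k - 1) ≤ ℓ) (h2 : ℓ < ℓ') (h3 : ℓ' < ℓ'') (h4 : ℓ'' < 2 ^ k)
    (h5 : 2 * ℓ'' ≤ n)
    (hsq : IsOpSquareAt w 1 ℓ) (hsq' : IsOpSquareAt w 1 ℓ') (hsq'' : IsOpSquareAt w 1 ℓ'') :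
    (∀ j : ℕ, 1 ≤ j → j ≤ ℓ / (ℓ' - ℓ) →
        ∃ x : ℕ, Leftmost w x ∧ (j - 1) * (ℓ' - ℓ) < x ∧ x ≤ j * (ℓ' - ℓ)) ∨
    (∀ j : ℕ, 1 ≤ j → j ≤ ℓ' / (ℓ'' - ℓ') →
        ∃ x : ℕ, Leftmost w x ∧ (j - 1) * (ℓ'' - ℓ') < x ∧ x ≤ j * (ℓ'' - ℓ')) := by
  by_contra hcon
  push_neg at hcon
  obtain ⟨hA, hB⟩ := hcon
  obtain ⟨j, hj1, hjf, hbadj⟩ := hA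
  obtain ⟨j', hj'1, hj'f, hbadj'⟩ := hB
  have hΔ : 0 < ℓ' - ℓ := by omega
  have hΔ' : 0 < ℓ'' - ℓ' := by omega
  -- Δ + Δ' ≤ ℓ, since ℓ'' < 2^k = 2·2^(k-1) ≤ 2ℓ
  have hΔℓ : (ℓ' - ℓ) + (ℓ'' - ℓ') ≤ ℓ := by
    have hpow : 2 ^ k = 2 * 2 ^ (k - 1) := by
      conv_lhs => rw [show k = (k - 1) + 1 by omega]
      rw [pow_succ]
      ring
    omega
  -- turn the negated statements into "no leftmost occurrence in the bad block"
  have hbad : ∀ x : ℕ, (j - 1) * (ℓ' - ℓ) < x → x ≤ j * (ℓ' - ℓ) →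
      ∃ y : ℕ, 1 ≤ y ∧ y < x ∧ w y = w x := by
    intro x hx1 hx2
    by_contra hy
    push_neg at hy
    exact absurd hx2 (not_le.mpr (hbadj x hy hx1))
  have hbad' : ∀ x : ℕ, (j' - 1) * (ℓ'' - ℓ') < x → x ≤ j' * (ℓ'' - ℓ') →
      ∃ y : ℕ, 1 ≤ y ∧ y < x ∧ w y = w x := by
    intro x hx1 hx2
    by_contra hy
    push_neg at hy
    exact absurd hx2 (not_le.mpr (hbadj' x hy hx1))
  -- the bad block index is at least 2, since position 1 is always leftmost
  have hone : Leftmost w 1 := by intro y hy1 hy2 _; omega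
  have hj2 : 2 ≤ j := by
    by_contra hj
    have : j = 1 := by omega
    subst this
    obtain ⟨y, hy1, hy2, _⟩ := hbad 1 (by omega) (by omega)
    omega
  have hj'2 : 2 ≤ j' := by
    by_contra hj
    have : j' = 1 := by omega
    subst this
    obtain ⟨y, hy1, hy2, _⟩ := hbad' 1 (by omega) (by omega)
    omega
  have hjl : j * (ℓ' - ℓ) ≤ ℓ := (Nat.le_div_iff_mul_le hΔ).mp hjf
  have hj'l : j' * (ℓ'' - ℓ') ≤ ℓ' := (Nat.le_div_iff_mul_le hΔ').mp hj'f
  -- exact periods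
  have PΔ := period_of_badblock w ℓ ℓ' h2 hsq.1 hsq'.1 j hj2 hjl hbad
  have PΔ' := period_of_badblock w ℓ' ℓ'' h3 hsq'.1 hsq''.1 j' hj'2 hj'l hbad'
  have IterΔ := iterPeriod w (ℓ' - ℓ) ℓ hΔ PΔ
  have IterΔ' := iterPeriod w (ℓ'' - ℓ') ℓ' hΔ' PΔ'
  -- every character of the second arm of the square of length 2ℓ' occurs in its first arm
  have key : ∀ a : ℕ, a < ℓ' → ∃ b : ℕ, b < ℓ' ∧ w (1 + ℓ' + a) = w (1 + b) := by
    intro a ha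
    obtain ⟨r', hr'1, hr'2, hr'3⟩ := IterΔ' (1 + a) (by omega) (by omega)
    have e2a := hsq'.1 a (r' - 1) ha (by omega)
    have e2b := hsq'.1 (r' - 1) a (by omega) ha
    rw [show 1 + (r' - 1) = r' by omega, show 1 + ℓ' + (r' - 1) = ℓ' + r' by omega]
      at e2a e2b
    have step1 : w (1 + ℓ' + a) = w (ℓ' + r') :=
      le_antisymm (e2a.mp (le_of_eq hr'3.symm)) (e2b.mp (le_of_eq hr'3))
    obtain ⟨r, hr1, hr2, hr3⟩ := IterΔ ((ℓ' - ℓ) + r') (by omega) (by omega)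
    have e1a := hsq.1 ((ℓ' - ℓ) + r' - 1) (r - 1) (by omega) (by omega)
    have e1b := hsq.1 (r - 1) ((ℓ' - ℓ) + r' - 1) (by omega) (by omega)
    rw [show 1 + ((ℓ' - ℓ) + r' - 1) = (ℓ' - ℓ) + r' by omega,
        show 1 + (r - 1) = r by omega,
        show 1 + ℓ + ((ℓ' - ℓ) + r' - 1) = ℓ' + r' by omega,
        show 1 + ℓ + (r - 1) = ℓ + r by omega] at e1a e1b
    have step2 : w (ℓ' + r') = w (ℓ + r) :=
      le_antisymm (e1a.mp (le_of_eq hr3.symm)) (e1b.mp (le_of_eq hr3))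
    refine ⟨ℓ + r - 1, by omega, ?_⟩
    rw [show 1 + (ℓ + r - 1) = ℓ + r by omega]
    exact step1.trans step2
  -- hence the two arms of the square of length 2ℓ' are equal: contradiction
  have alleq := isoEq ℓ' (fun a => w (1 + a)) (fun a => w (1 + ℓ' + a))
    (fun a b ha hb => hsq'.1 a b ha hb) key
  obtain ⟨a, ha, hne⟩ := hsq'.2
  exact hne (alleq a ha)
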